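/- In U_q(sl3), E_1 \hat{F}_3[a] = \hat{F}_3[a+1] E_1 + F_2 (q^{a+1} K_1 K_2 - q^{-a-1} (K_1 K_2)^{-1})/(q - q^{-1}). -/

import Mathlib

noncomputable section

/-- The defining relations of `U_q(sl3)` inside an `ℝ`-algebra `R`:
generators `E₁ E₂ F₁ F₂` and `K₁ K₂` with inverses `K₁' K₂'`. -/
structure UqSL3 (R : Type*) [Ring R] [Algebra ℝ R] (q : ℝ)
    (E₁ E₂ F₁ F₂ K₁ K₁' K₂ K₂' : R) : Prop where
  K₁mul : K₁ * K₁' = 1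
  K₁mul' : K₁' * K₁ = 1
  K₂mul : K₂ * K₂' = 1
  K₂mul' : K₂' * K₂ = 1
  Kcomm : K₁ * K₂ = K₂ * K₁
  Kcomm' : K₁ * K₂' = K₂' * K₁
  Kcomm'' : K₁' * K₂ = K₂ * K₁'
  KE11 : K₁ * E₁ = (q ^ (2:ℤ)) • (E₁ * K₁)
  KE12 : K₁ * E₂ = (q ^ (-1:ℤ)) • (E₂ * K₁)
  KE21 : K₂ * E₁ = (q ^ (-1:ℤ)) • (E₁ * K₂)
  KE22 : K₂ * E₂ = (q ^ (2:ℤ)) • (E₂ * K₂)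
  KF11 : K₁ * F₁ = (q ^ (-2:ℤ)) • (F₁ * K₁)
  KF12 : K₁ * F₂ = (q ^ (1:ℤ)) • (F₂ * K₁)
  KF21 : K₂ * F₁ = (q ^ (1:ℤ)) • (F₁ * K₂)
  KF22 : K₂ * F₂ = (q ^ (-2:ℤ)) • (F₂ * K₂)
  EF11 : E₁ * F₁ - F₁ * E₁ = (q - q⁻¹)⁻¹ • (K₁ - K₁')
  EF22 : E₂ * F₂ - F₂ * E₂ = (q - q⁻¹)⁻¹ • (K₂ - K₂')
  EF12 : E₁ * F₂ = F₂ * E₁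
  EF21 : E₂ * F₁ = F₁ * E₂
  serreE₁ : E₁ ^ 2 * E₂ - (q + q⁻¹) • (E₁ * E₂ * E₁) + E₂ * E₁ ^ 2 = 0
  serreE₂ : E₂ ^ 2 * E₁ - (q + q⁻¹) • (E₂ * E₁ * E₂) + E₁ * E₂ ^ 2 = 0
  serreF₁ : F₁ ^ 2 * F₂ - (q + q⁻¹) • (F₁ * F₂ * F₁) + F₂ * F₁ ^ 2 = 0
  serreF₂ : F₂ ^ 2 * F₁ - (q + q⁻¹) • (F₂ * F₁ * F₂) + F₁ * F₂ ^ 2 = 0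

/-- `F̂₃[a] = F₁F₂ (q^{a+1}K₂ - q^{-a-1}K₂⁻¹)/(q-q⁻¹) - F₂F₁ (q^a K₂ - q^{-a}K₂⁻¹)/(q-q⁻¹)`. -/
def hatF₃ {R : Type*} [Ring R] [Algebra ℝ R] (q a : ℝ) (F₁ F₂ K₂ K₂' : R) : R :=
  (q - q⁻¹)⁻¹ • (F₁ * F₂ * (q ^ (a + 1) • K₂ - q ^ (-(a + 1)) • K₂')
    - F₂ * F₁ * (q ^ a • K₂ - q ^ (-a) • K₂'))
theorem stmt {R : Type*} [Ring R] [Algebra ℝ R] (q : ℝ) (hq0 : 0 < q) (hq1 : q < 1)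
    (E₁ E₂ F₁ F₂ K₁ K₁' K₂ K₂' : R)
    (h : UqSL3 R q E₁ E₂ F₁ F₂ K₁ K₁' K₂ K₂') (a : ℝ) :
    E₁ * hatF₃ q a F₁ F₂ K₂ K₂'
      = hatF₃ q (a + 1) F₁ F₂ K₂ K₂' * E₁
        + (q - q⁻¹)⁻¹ • (F₂ * (q ^ (a + 1) • (K₁ * K₂) - q ^ (-(a + 1)) • (K₂' * K₁'))) := by
  have hq : q ≠ 0 := hq0.ne'
  -- basic commutation lemmas
  have hEF1 : E₁ * F₁ = F₁ * E₁ + (q - q⁻¹)⁻¹ • (K₁ - K₁') := by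
    rw [← h.EF11]; abel
  have hEK2 : E₁ * K₂ = q • (K₂ * E₁) := by
    rw [h.KE21, smul_smul, zpow_neg, zpow_one, mul_inv_cancel₀ hq, one_smul]
  have hEK2' : E₁ * K₂' = q⁻¹ • (K₂' * E₁) := by
    have : E₁ * K₂' = K₂' * (K₂ * E₁) * K₂' := by
      rw [← mul_assoc, h.K₂mul', one_mul]
    rw [this, h.KE21, zpow_neg, zpow_one, mul_smul_comm, smul_mul_assoc]
    congr 1
    rw [mul_assoc, mul_assoc, h.K₂mul, mul_one]
  have hK1F2 : K₁ * F₂ = q • (F₂ * K₁) := by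
    rw [h.KF12, zpow_one]
  have hK1'F2 : K₁' * F₂ = q⁻¹ • (F₂ * K₁') := by
    have hFK : F₂ * K₁ = q⁻¹ • (K₁ * F₂) := by
      rw [hK1F2, smul_smul, inv_mul_cancel₀ hq, one_smul]
    have : K₁' * F₂ = K₁' * (F₂ * K₁) * K₁' := by
      rw [mul_assoc, mul_assoc, h.K₁mul, mul_one]
    rw [this, hFK, mul_smul_comm, smul_mul_assoc]
    congr 1
    rw [← mul_assoc, h.K₁mul', one_mul]
  have hK1'K2' : K₁' * K₂' = K₂' * K₁' := by
    have : K₁' * (K₁ * K₂') * K₁' = K₁' * (K₂' * K₁) * K₁' := by rw [h.Kcomm']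
    rw [← mul_assoc, ← mul_assoc, h.K₁mul', one_mul, mul_assoc, mul_assoc, h.K₁mul,
      mul_one] at this
    exact this.symm
  -- trailing-variable versions for simp
  have c1 : ∀ x : R, E₁ * (F₁ * x)
      = F₁ * (E₁ * x) + (q - q⁻¹)⁻¹ • (K₁ * x) - (q - q⁻¹)⁻¹ • (K₁' * x) := by
    intro x
    rw [← mul_assoc, hEF1, add_mul, smul_mul_assoc, mul_assoc, sub_mul, smul_sub]
    abel
  have c2 : ∀ x : R, E₁ * (F₂ * x) = F₂ * (E₁ * x) := by
    intro x; rw [← mul_assoc, h.EF12, mul_assoc]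
  have c3 : ∀ x : R, E₁ * (K₂ * x) = q • (K₂ * (E₁ * x)) := by
    intro x; rw [← mul_assoc, hEK2, smul_mul_assoc, mul_assoc]
  have c4 : ∀ x : R, E₁ * (K₂' * x) = q⁻¹ • (K₂' * (E₁ * x)) := by
    intro x; rw [← mul_assoc, hEK2', smul_mul_assoc, mul_assoc]
  have k1 : ∀ x : R, K₁ * (F₂ * x) = q • (F₂ * (K₁ * x)) := by
    intro x; rw [← mul_assoc, hK1F2, smul_mul_assoc, mul_assoc]
  have k2 : ∀ x : R, K₁' * (F₂ * x) = q⁻¹ • (F₂ * (K₁' * x)) := by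
    intro x; rw [← mul_assoc, hK1'F2, smul_mul_assoc, mul_assoc]
  have k3 : ∀ x : R, K₁' * (K₂' * x) = K₂' * (K₁' * x) := by
    intro x; rw [← mul_assoc, hK1'K2', mul_assoc]
  have k4 : K₁' * K₂' = K₂' * K₁' := hK1'K2'
  simp only [hatF₃, mul_sub, sub_mul, mul_add, add_mul, smul_sub, smul_add, mul_smul_comm,
    smul_mul_assoc, smul_smul, mul_assoc, c1, c2, c3, c4, k1, k2, k3, k4, hEK2, hEK2',
    hK1F2, hK1'F2]
  have hq2 : q ^ (2:ℕ) - 1 ≠ 0 := by nlinarith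
  have hc : (q - q⁻¹)⁻¹ = q / (q ^ (2:ℕ) - 1) := by
    have hd : q - q⁻¹ = (q ^ (2:ℕ) - 1) / q := by
      field_simp
    rw [hd, inv_div]
  have hpa : q ^ a ≠ 0 := (Real.rpow_pos_of_pos hq0 a).ne'
  match_scalars <;>
    simp only [Real.rpow_add hq0, Real.rpow_neg hq0.le, Real.rpow_one, hc] <;>
    (try field_simp) <;> (try ring)
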